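/- Let g : ℝⁿ → ℝ be convex, μ > 0, p ≥ 1. Suppose λ* ≠ 0 is a global minimizer of φ(λ) = g(λ) + (μ/(1+1/p))·‖λ‖^{1+1/p}. Let λ⁰, λ¹, …, λᴺ be a sequence in ℝⁿ with ‖λ⁰‖ ≥ ‖λ*‖ such that for each 0 ≤ k < N, λᵏ⁺¹ is a global minimizer of λ ↦ g(λ) + (μ/2)·‖λᵏ‖^{(1/p)−1}·‖λ‖², and λᵏ ≠ λ* for k = 1, …, N. Then ln(‖λᵏ‖/‖λ*‖) ≤ (1 − 1/p)ᵏ · ln(‖λ⁰‖/‖λ*‖) for every k = 1, …, N. -/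

import Mathlib

open Filter Set
open scoped Topology RealInnerProductSpace

/-- If `x` minimizes `g + ψ∘param` along the segment to `y`, and the penalty term has
derivative `D` at `0`, then `g x - g y ≤ D`. -/
lemma directional_min_ineq {E : Type*} [NormedAddCommGroup E] [NormedSpace ℝ E]
    (g : E → ℝ) (hg : ConvexOn ℝ Set.univ g) (x y : E) (ψ : ℝ → ℝ) (D : ℝ)
    (hψ : HasDerivAt ψ D 0)
    (h : ∀ θ : ℝ, θ ∈ Set.Icc (0:ℝ) 1 → g x + ψ 0 ≤ g (x + θ • (y - x)) + ψ θ) :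
    g x - g y ≤ D := by
  have key : ∀ θ ∈ Set.Ioc (0:ℝ) 1, g x - g y ≤ (ψ θ - ψ 0) / θ := by
    intro θ hθ
    have hθ0 : 0 < θ := hθ.1
    have hconv := hg.2 (Set.mem_univ x) (Set.mem_univ y)
      (by linarith [hθ.2] : (0:ℝ) ≤ 1 - θ) hθ0.le (by ring)
    have hx : x + θ • (y - x) = (1 - θ) • x + θ • y := by
      rw [smul_sub, sub_smul, one_smul]; abel
    have h1 := h θ ⟨hθ0.le, hθ.2⟩
    rw [hx] at h1
    rw [le_div_iff₀ hθ0]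
    simp only [smul_eq_mul] at hconv
    nlinarith [hconv, h1]
  have tends : Tendsto (fun θ => (ψ θ - ψ 0) / θ) (𝓝[>] (0:ℝ)) (𝓝 D) := by
    have h1 : Tendsto (slope ψ 0) (𝓝[≠] (0:ℝ)) (𝓝 D) :=
      hasDerivAt_iff_tendsto_slope.mp hψ
    have h2 : Tendsto (slope ψ 0) (𝓝[>] (0:ℝ)) (𝓝 D) :=
      h1.mono_left (nhdsWithin_mono _ (fun θ hθ => ne_of_gt hθ))
    refine h2.congr (fun θ => ?_)
    simp [slope_def_field, div_eq_div_iff]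
  refine ge_of_tendsto tends ?_
  filter_upwards [Ioc_mem_nhdsGT_of_mem (Set.mem_Ico.mpr ⟨le_refl (0:ℝ), zero_lt_one⟩)]
    with θ hθ using key θ hθ

/-- Pure scalar consequence of the two optimality conditions. -/
lemma scalar_bounds (μ T S a s ip : ℝ) (hμ : 0 < μ) (hT : 0 < T) (hS : 0 < S)
    (hTS : T ≤ S) (ha : 0 ≤ a) (hs : 0 < s)
    (hip : ip ≤ a * s)
    (hsum : 0 ≤ μ * T * (ip - a ^ 2) + μ * S * (ip - s ^ 2)) :
    s ≤ a ∧ T * a ≤ S * s := by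
  have h2 : (0:ℝ) ≤ T * (ip - a ^ 2) + S * (ip - s ^ 2) := by
    have h3 : μ * 0 ≤ μ * (T * (ip - a ^ 2) + S * (ip - s ^ 2)) := by nlinarith
    exact le_of_mul_le_mul_left h3 hμ
  have hkey : T * a ^ 2 + S * s ^ 2 ≤ (T + S) * (a * s) := by
    have h4 : (T + S) * ip ≤ (T + S) * (a * s) :=
      mul_le_mul_of_nonneg_left hip (by positivity)
    nlinarith
  have hlow : s ≤ a := by
    by_contra h
    push_neg at h
    have h4 : T * a ≤ S * a := mul_le_mul_of_nonneg_right hTS ha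
    have h5 : S * a < S * s := mul_lt_mul_of_pos_left h hS
    have h6 : T * a < S * s := lt_of_le_of_lt h4 h5
    nlinarith
  refine ⟨hlow, ?_⟩
  rcases eq_or_lt_of_le hlow with heq | hlt
  · rw [← heq]
    exact mul_le_mul_of_nonneg_right hTS (heq ▸ ha)
  · nlinarith [sub_pos.mpr hlt]

/-- One step of the fixed point iteration: the norm stays above `‖λ*‖` and the
log-ratio contracts by a factor `1 - 1/p`. -/
lemma fixed_point_one_step
    (n : ℕ) (g : EuclideanSpace ℝ (Fin n) → ℝ)
    (hg : ConvexOn ℝ Set.univ g) (μ p : ℝ) (hμ : 0 < μ) (hp : 1 ≤ p)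
    (y : EuclideanSpace ℝ (Fin n)) (hy0 : y ≠ 0)
    (hstar : ∀ z : EuclideanSpace ℝ (Fin n),
      g y + μ / (1 + 1 / p) * ‖y‖ ^ (1 + 1 / p) ≤
        g z + μ / (1 + 1 / p) * ‖z‖ ^ (1 + 1 / p))
    (x w : EuclideanSpace ℝ (Fin n)) (hw : ‖y‖ ≤ ‖w‖)
    (hminx : ∀ z : EuclideanSpace ℝ (Fin n),
      g x + μ / 2 * ‖w‖ ^ (1 / p - 1) * ‖x‖ ^ 2 ≤
        g z + μ / 2 * ‖w‖ ^ (1 / p - 1) * ‖z‖ ^ 2) :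
    ‖y‖ ≤ ‖x‖ ∧ Real.log (‖x‖ / ‖y‖) ≤ (1 - 1 / p) * Real.log (‖w‖ / ‖y‖) := by
  have hs : (0:ℝ) < ‖y‖ := norm_pos_iff.mpr hy0
  have ht : (0:ℝ) < ‖w‖ := lt_of_lt_of_le hs hw
  have hp0 : (0:ℝ) < p := lt_of_lt_of_le zero_lt_one hp
  have hq0 : (0:ℝ) < 1 + 1 / p := by positivity
  set s := ‖y‖ with hsdef
  set t := ‖w‖ with htdef
  set a := ‖x‖ with hadef
  set T := t ^ (1 / p - 1) with hTdef
  set S := s ^ (1 / p - 1) with hSdef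
  have hT : 0 < T := Real.rpow_pos_of_pos ht _
  have hS : 0 < S := Real.rpow_pos_of_pos hs _
  have hTS : T ≤ S := Real.rpow_le_rpow_of_nonpos hs hw (by
    have : 1 / p ≤ 1 := by
      rw [div_le_one hp0]; exact hp
    linarith)
  -- expansion of squared norms along the segment
  have hexp : ∀ (u v : EuclideanSpace ℝ (Fin n)) (θ : ℝ),
      ‖u + θ • v‖ ^ 2 = ‖u‖ ^ 2 + (2 * ⟪u, v⟫) * θ + ‖v‖ ^ 2 * θ ^ 2 := by
    intro u v θ
    rw [norm_add_sq_real, real_inner_smul_right, norm_smul, Real.norm_eq_abs, mul_pow, sq_abs]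
    ring
  -- derivative of the polynomial
  have hpoly : ∀ (c0 c1 c2 : ℝ),
      HasDerivAt (fun θ : ℝ => c0 + c1 * θ + c2 * θ ^ 2) c1 0 := by
    intro c0 c1 c2
    have h1 : HasDerivAt (fun θ : ℝ => θ) 1 0 := hasDerivAt_id 0
    have h2 : HasDerivAt (fun θ : ℝ => θ ^ 2) (2 * (0:ℝ) ^ 1) 0 := hasDerivAt_pow 2 0
    have h3 := ((hasDerivAt_const (0:ℝ) c0).add (h1.const_mul c1)).add (h2.const_mul c2)
    simp only [mul_one, mul_zero, add_zero, zero_add, pow_one] at h3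
    exact h3
  -- Step A : g x - g y ≤ μ * T * ⟪x, y - x⟫
  have stepA : g x - g y ≤ μ * T * ⟪x, y - x⟫ := by
    have hD : HasDerivAt (fun θ : ℝ => μ / 2 * T * ‖x + θ • (y - x)‖ ^ 2)
        (μ * T * ⟪x, y - x⟫) 0 := by
      have h1 : HasDerivAt (fun θ : ℝ =>
          μ / 2 * T * (‖x‖ ^ 2 + (2 * ⟪x, y - x⟫) * θ + ‖y - x‖ ^ 2 * θ ^ 2))
          (μ / 2 * T * (2 * ⟪x, y - x⟫)) 0 :=
        (hpoly (‖x‖^2) (2 * ⟪x, y - x⟫) (‖y - x‖^2)).const_mul (μ / 2 * T)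
      have h2 : (fun θ : ℝ => μ / 2 * T * (‖x‖ ^ 2 + (2 * ⟪x, y - x⟫) * θ + ‖y - x‖ ^ 2 * θ ^ 2))
          = fun θ : ℝ => μ / 2 * T * ‖x + θ • (y - x)‖ ^ 2 := by
        funext θ; rw [hexp]
      rw [h2] at h1
      convert h1 using 1; ring
    refine directional_min_ineq g hg x y _ _ hD ?_
    intro θ _
    have := hminx (x + θ • (y - x))
    simpa using this
  -- Step B : g y - g x ≤ μ * S * ⟪y, x - y⟫
  have stepB : g y - g x ≤ μ * S * ⟪y, x - y⟫ := by
    set c := μ / (1 + 1 / p) with hcdef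
    have hrpow_sq : ∀ v : EuclideanSpace ℝ (Fin n),
        ‖v‖ ^ (1 + 1 / p) = (‖v‖ ^ 2) ^ ((1 + 1 / p) / 2) := by
      intro v
      rw [← Real.rpow_natCast ‖v‖ 2, ← Real.rpow_mul (norm_nonneg v)]
      congr 1
      push_cast
      ring
    have hQ : HasDerivAt (fun θ : ℝ => ‖y + θ • (x - y)‖ ^ 2) (2 * ⟪y, x - y⟫) 0 := by
      have h1 := hpoly (‖y‖^2) (2 * ⟪y, x - y⟫) (‖x - y‖^2)
      have h2 : (fun θ : ℝ => ‖y‖ ^ 2 + (2 * ⟪y, x - y⟫) * θ + ‖x - y‖ ^ 2 * θ ^ 2)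
          = fun θ : ℝ => ‖y + θ • (x - y)‖ ^ 2 := by
        funext θ; rw [hexp]
      rwa [h2] at h1
    have hQ0 : ‖y + (0:ℝ) • (x - y)‖ ^ 2 = s ^ 2 := by simp [hsdef]
    have hD0 : HasDerivAt (fun θ : ℝ => (‖y + θ • (x - y)‖ ^ 2) ^ ((1 + 1 / p) / 2))
        (2 * ⟪y, x - y⟫ * ((1 + 1 / p) / 2) * (‖y + (0:ℝ) • (x - y)‖ ^ 2) ^ ((1 + 1 / p) / 2 - 1))
        0 := hQ.rpow_const (Or.inl (by rw [hQ0]; positivity))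
    have hs2 : (s ^ 2 : ℝ) ^ ((1 + 1 / p) / 2 - 1) = s ^ (1 / p - 1) := by
      rw [← Real.rpow_natCast s 2, ← Real.rpow_mul hs.le]
      congr 1; push_cast; ring
    have hD : HasDerivAt (fun θ : ℝ => c * ‖y + θ • (x - y)‖ ^ (1 + 1 / p))
        (μ * S * ⟪y, x - y⟫) 0 := by
      have h1 := hD0.const_mul c
      have h2 : (fun θ : ℝ => c * (‖y + θ • (x - y)‖ ^ 2) ^ ((1 + 1 / p) / 2))
          = fun θ : ℝ => c * ‖y + θ • (x - y)‖ ^ (1 + 1 / p) := by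
        funext θ; rw [hrpow_sq]
      rw [h2] at h1
      refine h1.congr_deriv ?_
      rw [hQ0, hs2, hSdef, hcdef]
      field_simp
    refine directional_min_ineq g hg y x _ _ hD ?_
    intro θ _
    have := hstar (y + θ • (x - y))
    simpa [hcdef] using this
  -- combine
  have hip : ⟪x, y⟫ ≤ a * s := by
    have := real_inner_le_norm x y
    simpa [hadef, hsdef] using this
  have hxyx : ⟪x, y - x⟫ = ⟪x, y⟫ - a ^ 2 := by
    rw [inner_sub_right, real_inner_self_eq_norm_sq]
  have hyxy : ⟪y, x - y⟫ = ⟪x, y⟫ - s ^ 2 := by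
    rw [inner_sub_right, real_inner_self_eq_norm_sq, real_inner_comm]
  rw [hxyx] at stepA
  rw [hyxy] at stepB
  have hsum : 0 ≤ μ * T * (⟪x, y⟫ - a ^ 2) + μ * S * (⟪x, y⟫ - s ^ 2) := by linarith
  have ha0 : (0:ℝ) ≤ a := norm_nonneg x
  obtain ⟨hlow, hTa⟩ := scalar_bounds μ T S a s ⟪x, y⟫ hμ hT hS hTS ha0 hs hip hsum
  have hup : a ≤ s ^ (1 / p) * t ^ (1 - 1 / p) := by
    have hTt : T * t ^ (1 - 1 / p) = 1 := by
      rw [hTdef, ← Real.rpow_add ht]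
      norm_num
    have hSs : S * s = s ^ (1 / p) := by
      rw [hSdef, ← Real.rpow_add_one hs.ne']
      norm_num
    have h1 : T * a * t ^ (1 - 1 / p) ≤ S * s * t ^ (1 - 1 / p) :=
      mul_le_mul_of_nonneg_right hTa (Real.rpow_pos_of_pos ht _).le
    calc a = T * a * t ^ (1 - 1 / p) := by
            rw [mul_comm T a, mul_assoc, hTt, mul_one]
      _ ≤ S * s * t ^ (1 - 1 / p) := h1
      _ = s ^ (1 / p) * t ^ (1 - 1 / p) := by rw [hSs]
  refine ⟨hlow, ?_⟩
  have ha : (0:ℝ) < a := lt_of_lt_of_le hs hlow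
  have hloga : Real.log a ≤ (1 / p) * Real.log s + (1 - 1 / p) * Real.log t := by
    have h1 : Real.log a ≤ Real.log (s ^ (1 / p) * t ^ (1 - 1 / p)) :=
      Real.log_le_log ha hup
    rwa [Real.log_mul (by positivity) (by positivity),
      Real.log_rpow hs, Real.log_rpow ht] at h1
  rw [Real.log_div ha.ne' hs.ne', Real.log_div ht.ne' hs.ne']
  nlinarith [hloga]

/-- Along the fixed point iteration started above `‖λ*‖`, one has
`ln(‖λᵏ‖/‖λ*‖) ≤ (1 − 1/p)ᵏ ln(‖λ⁰‖/‖λ*‖)` for `k = 1, …, N`. -/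
theorem fixed_point_iteration_log_decay
    (n : ℕ) (g : EuclideanSpace ℝ (Fin n) → ℝ)
    (hg : ConvexOn ℝ Set.univ g) (μ p : ℝ) (hμ : 0 < μ) (hp : 1 ≤ p)
    (lamstar : EuclideanSpace ℝ (Fin n)) (hstar0 : lamstar ≠ 0)
    (hstar : ∀ z : EuclideanSpace ℝ (Fin n),
      g lamstar + μ / (1 + 1 / p) * ‖lamstar‖ ^ (1 + 1 / p) ≤
        g z + μ / (1 + 1 / p) * ‖z‖ ^ (1 + 1 / p))
    (lam : ℕ → EuclideanSpace ℝ (Fin n)) (N : ℕ)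
    (h0 : ‖lamstar‖ ≤ ‖lam 0‖)
    (hmin : ∀ k < N, ∀ z : EuclideanSpace ℝ (Fin n),
      g (lam (k + 1)) + μ / 2 * ‖lam k‖ ^ (1 / p - 1) * ‖lam (k + 1)‖ ^ 2 ≤
        g z + μ / 2 * ‖lam k‖ ^ (1 / p - 1) * ‖z‖ ^ 2)
    (hne : ∀ k, 1 ≤ k → k ≤ N → lam k ≠ lamstar) :
    ∀ k, 1 ≤ k → k ≤ N →
      Real.log (‖lam k‖ / ‖lamstar‖) ≤
        (1 - 1 / p) ^ k * Real.log (‖lam 0‖ / ‖lamstar‖) := by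
  have hp0 : (0:ℝ) < p := lt_of_lt_of_le zero_lt_one hp
  have hfac : (0:ℝ) ≤ 1 - 1 / p := by
    have : 1 / p ≤ 1 := by rw [div_le_one hp0]; exact hp
    linarith
  have main : ∀ k, k ≤ N → ‖lamstar‖ ≤ ‖lam k‖ ∧
      Real.log (‖lam k‖ / ‖lamstar‖) ≤
        (1 - 1 / p) ^ k * Real.log (‖lam 0‖ / ‖lamstar‖) := by
    intro k
    induction k with
    | zero => intro _; exact ⟨h0, by simp⟩
    | succ k ih =>
      intro hkN
      have hk : k ≤ N := Nat.le_of_succ_le hkN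
      obtain ⟨ih1, ih2⟩ := ih hk
      have hstep := fixed_point_one_step n g hg μ p hμ hp lamstar hstar0 hstar
        (lam (k + 1)) (lam k) ih1 (hmin k (Nat.lt_of_succ_le hkN))
      refine ⟨hstep.1, ?_⟩
      calc Real.log (‖lam (k + 1)‖ / ‖lamstar‖)
          ≤ (1 - 1 / p) * Real.log (‖lam k‖ / ‖lamstar‖) := hstep.2
        _ ≤ (1 - 1 / p) * ((1 - 1 / p) ^ k * Real.log (‖lam 0‖ / ‖lamstar‖)) :=
            mul_le_mul_of_nonneg_left ih2 hfac
        _ = (1 - 1 / p) ^ (k + 1) * Real.log (‖lam 0‖ / ‖lamstar‖) := by ring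
  intro k _ hkN
  exact (main k hkN).2
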